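/- arXiv:2510.14124 — 2 statements merged into one kernel-verified Lean document; each statement's English description precedes it below -/
import Mathlib

section
/- For every nonnegative integer a, the generating function identity ∑_{N≥0} p(2N - (2a+1), 4, N) z^N = z^{a+1}(1 + z - z^{a+1}) / ((1-z)^2 (1-z^2)(1-z^3)) holds as an identity of formal power series. -/
/-- `pBdd n m N` is the number of partitions of `n` into at most `m` parts,
each part at most `N`; it is `0` for negative `n`. -/
noncomputable def pBdd (n : ℤ) (m N : ℕ) : ℕ :=
  if 0 ≤ n then
    Nat.card {π : Nat.Partition n.toNat //
      Multiset.card π.parts ≤ m ∧ ∀ i ∈ π.parts, i ≤ N}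
  else 0

/-- `pAtMost n m` is the number of partitions of `n` into at most `m` parts;
it is `0` for negative `n`. -/
noncomputable def pAtMost (n : ℤ) (m : ℕ) : ℕ :=
  if 0 ≤ n then
    Nat.card {π : Nat.Partition n.toNat // Multiset.card π.parts ≤ m}
  else 0

lemma card_subtype_or {α : Type*} [DecidableEq α] [Fintype α] {p q : α → Prop} [DecidablePred p] [DecidablePred q]
    (h : ∀ a, ¬(p a ∧ q a)) :
    Nat.card {x // p x ∨ q x} = Nat.card {x // p x} + Nat.card {x // q x} := by
  simp only [Nat.card_eq_fintype_card, Fintype.card_subtype]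
  rw [Finset.filter_or, Finset.card_union_of_disjoint]
  rw [Finset.disjoint_filter]
  intro a _ hp hq
  exact h a ⟨hp, hq⟩

open Multiset

lemma sum_map_pred (s : Multiset ℕ) (hs : ∀ p ∈ s, 0 < p) :
    (s.map (· - 1)).sum + Multiset.card s = s.sum := by
  induction s using Multiset.induction with
  | empty => simp
  | cons a s ih =>
    simp only [Multiset.map_cons, Multiset.sum_cons, Multiset.card_cons]
    have ha : 0 < a := hs a (mem_cons_self a s)
    have := ih (fun p hp => hs p (mem_cons_of_mem hp))
    omega

lemma sum_filter_ne_zero (s : Multiset ℕ) :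
    (s.filter (· ≠ 0)).sum = s.sum := by
  have h := Multiset.sum_filter_add_sum_filter_not (s := s) (fun x => x ≠ 0)
  rw [← h]
  have : (s.filter (fun a => ¬ a ≠ 0)).sum = 0 := by
    apply Multiset.sum_eq_zero
    intro x hx
    have := Multiset.of_mem_filter hx
    simpa using this
  omega

/-- Partitions of `n` with exactly `m` parts ≃ partitions of `n - m` with at most `m` parts. -/
def exactEquiv (n m : ℕ) (hm : m ≤ n) :
    {π : Nat.Partition n // Multiset.card π.parts = m} ≃
    {σ : Nat.Partition (n - m) // Multiset.card σ.parts ≤ m} where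
  toFun := fun ⟨π, hπ⟩ =>
    ⟨⟨(π.parts.map (· - 1)).filter (· ≠ 0),
      by
        intro i hi
        exact Nat.pos_of_ne_zero (by simpa using Multiset.of_mem_filter hi),
      by
        rw [sum_filter_ne_zero]
        have h1 := sum_map_pred π.parts (fun p hp => π.parts_pos hp)
        have h2 := π.parts_sum
        omega⟩,
      by
        calc Multiset.card ((π.parts.map (· - 1)).filter (· ≠ 0))
            ≤ Multiset.card (π.parts.map (· - 1)) := card_le_card (filter_le _ _)
          _ = m := by rw [card_map, hπ]⟩
  invFun := fun ⟨σ, hσ⟩ =>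
    ⟨⟨σ.parts.map (· + 1) + Multiset.replicate (m - Multiset.card σ.parts) 1,
      by
        intro i hi
        rcases mem_add.1 hi with h | h
        · obtain ⟨j, _, rfl⟩ := mem_map.1 h
          omega
        · rw [eq_of_mem_replicate h]; omega,
      by
        rw [Multiset.sum_add, Multiset.sum_replicate, smul_eq_mul, mul_one]
        have h1 : (σ.parts.map (· + 1)).sum = σ.parts.sum + Multiset.card σ.parts := by
          induction σ.parts using Multiset.induction with
          | empty => simp
          | cons a s ih => simp [ih]; ring
        rw [h1, σ.parts_sum]
        omega⟩,
      by
        simp only [Multiset.card_add, card_map, card_replicate]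
        omega⟩
  left_inv := by
    rintro ⟨π, hπ⟩
    ext1
    ext1
    simp only
    rw [Multiset.filter_map, Multiset.map_map]
    set q : ℕ → Prop := ((fun x => x ≠ 0) ∘ fun x => x - 1) with hqdef
    have h1 : (Multiset.filter q π.parts).map ((fun x => x + 1) ∘ (fun x => x - 1))
        = Multiset.filter q π.parts := by
      have : ∀ x ∈ Multiset.filter q π.parts, ((fun x => x + 1) ∘ (fun x => x - 1)) x = id x := by
        intro x hx
        have := π.parts_pos (Multiset.mem_filter.1 hx).1
        simp only [Function.comp, id]
        omega
      rw [Multiset.map_congr rfl this, Multiset.map_id]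
    rw [h1]
    have hsplit := Multiset.filter_add_not q π.parts
    have hcard : Multiset.card (Multiset.filter (fun a => ¬ q a) π.parts)
        = m - Multiset.card (Multiset.filter q π.parts) := by
      have := congrArg Multiset.card hsplit
      rw [Multiset.card_add] at this
      omega
    have hrep : Multiset.filter (fun a => ¬ q a) π.parts
        = Multiset.replicate (m - Multiset.card (Multiset.filter q π.parts)) 1 := by
      rw [← hcard, Multiset.eq_replicate_card]
      intro b hb
      have h2 := Multiset.of_mem_filter hb
      have h3 := π.parts_pos (Multiset.mem_filter.1 hb).1
      simp only [hqdef, Function.comp, ne_eq, not_not] at h2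
      omega
    rw [Multiset.card_map, ← hrep]
    exact hsplit
  right_inv := by
    rintro ⟨σ, hσ⟩
    ext1
    ext1
    simp only
    rw [Multiset.map_add, Multiset.map_map, Multiset.map_replicate, Multiset.filter_add]
    have h1 : σ.parts.map ((fun x => x - 1) ∘ (fun x => x + 1)) = σ.parts := by
      rw [show σ.parts.map ((fun x => x - 1) ∘ (fun x => x + 1))
          = σ.parts.map (fun x => x) from rfl, Multiset.map_id']
    rw [h1]
    have h2 : Multiset.filter (fun x => x ≠ 0) σ.parts = σ.parts :=
      Multiset.filter_eq_self.2 (fun x hx => by have := σ.parts_pos hx; omega)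
    have h3 : Multiset.filter (fun x => x ≠ 0)
        (Multiset.replicate (m - Multiset.card σ.parts) ((1:ℕ) - 1)) = 0 := by
      refine Multiset.filter_eq_nil.2 (fun a ha => by simp [Multiset.eq_of_mem_replicate ha])
    rw [h2, h3, add_zero]

lemma exact_isEmpty (n m : ℕ) (h : n < m) :
    IsEmpty {π : Nat.Partition n // Multiset.card π.parts = m} := by
  constructor
  rintro ⟨π, hπ⟩
  have h1 := sum_map_pred π.parts (fun p hp => π.parts_pos hp)
  rw [π.parts_sum, hπ] at h1
  omega

lemma cA_split (n m : ℕ) :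
    Nat.card {π : Nat.Partition n // Multiset.card π.parts ≤ m + 1} =
    Nat.card {π : Nat.Partition n // Multiset.card π.parts = m + 1} +
    Nat.card {π : Nat.Partition n // Multiset.card π.parts ≤ m} := by
  rw [Nat.card_congr (Equiv.subtypeEquivRight (q := fun π : Nat.Partition n =>
    Multiset.card π.parts = m + 1 ∨ Multiset.card π.parts ≤ m) (fun π => by omega))]
  exact card_subtype_or (fun π => by omega)

lemma pAtMost_ofNat (n m : ℕ) :
    pAtMost (n : ℤ) m = Nat.card {π : Nat.Partition n // Multiset.card π.parts ≤ m} := by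
  simp [pAtMost]

lemma pAtMost_neg {n : ℤ} (h : n < 0) (m : ℕ) : pAtMost n m = 0 := by
  simp [pAtMost, not_le.2 h]

lemma pAtMost_zero (n : ℤ) : (pAtMost n 0 : ℤ) = if n = 0 then 1 else 0 := by
  rcases lt_or_ge n 0 with h | h
  · rw [pAtMost_neg h, if_neg (by omega : ¬ n = 0)]
    simp
  · lift n to ℕ using h
    rw [pAtMost_ofNat]
    rcases Nat.eq_zero_or_pos n with rfl | hn
    · have : Nat.card {π : Nat.Partition 0 // Multiset.card π.parts ≤ 0} = 1 := by
        rw [Nat.card_eq_one_iff_unique]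
        constructor
        · constructor
          rintro ⟨π, _⟩ ⟨π', _⟩
          exact Subtype.ext (Subsingleton.elim _ _)
        · exact ⟨⟨default, by simp⟩⟩
      simp [this]
    · have : IsEmpty {π : Nat.Partition n // Multiset.card π.parts ≤ 0} := by
        constructor
        rintro ⟨π, hπ⟩
        have h0 : π.parts = 0 := Multiset.card_eq_zero.1 (by omega)
        have := π.parts_sum
        rw [h0] at this
        simp at this
        omega
      rw [Nat.card_of_isEmpty, if_neg (by exact_mod_cast hn.ne' : ¬ (n : ℤ) = 0)]
      simp

lemma pAtMost_rec (n : ℤ) (m : ℕ) :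
    (pAtMost n (m + 1) : ℤ) = pAtMost (n - (m + 1)) (m + 1) + pAtMost n m := by
  rcases lt_or_ge n 0 with h | h
  · rw [pAtMost_neg h, pAtMost_neg (by omega) , pAtMost_neg h]
    simp
  · lift n to ℕ using h
    rcases le_or_gt ((m : ℤ) + 1) n with hle | hlt
    · have hmn : m + 1 ≤ n := by exact_mod_cast hle
      have h1 : ((n : ℤ) - (m + 1)) = ((n - (m + 1) : ℕ) : ℤ) := by push_cast; omega
      rw [h1, pAtMost_ofNat, pAtMost_ofNat, pAtMost_ofNat, cA_split]
      have := Nat.card_congr (exactEquiv n (m + 1) hmn)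
      rw [this]
      push_cast
      ring
    · have hmn : n < m + 1 := by exact_mod_cast hlt
      rw [pAtMost_neg (n := (n : ℤ) - (m + 1)) (by omega), pAtMost_ofNat, pAtMost_ofNat,
        cA_split]
      haveI := exact_isEmpty n (m + 1) hmn
      rw [Nat.card_of_isEmpty]
      push_cast
      ring

lemma pBdd_ofNat (n m N : ℕ) :
    pBdd (n : ℤ) m N = Nat.card {π : Nat.Partition n //
      Multiset.card π.parts ≤ m ∧ ∀ i ∈ π.parts, i ≤ N} := by
  simp [pBdd]

lemma pBdd_neg {n : ℤ} (h : n < 0) (m N : ℕ) : pBdd n m N = 0 := by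
  simp [pBdd, not_le.2 h]

lemma big_filter_card (n N : ℕ) (hn : n ≤ 2 * N + 1) (π : Nat.Partition n)
    (hbad : ¬ ∀ i ∈ π.parts, i ≤ N) :
    Multiset.card (π.parts.filter (fun i => ¬ i ≤ N)) = 1 := by
  push_neg at hbad
  obtain ⟨i, hi, hiN⟩ := hbad
  set F := π.parts.filter (fun i => ¬ i ≤ N) with hF
  have h1 : 1 ≤ Multiset.card F := by
    rw [Nat.one_le_iff_ne_zero, Ne, Multiset.card_eq_zero]
    intro h0
    have : i ∈ F := Multiset.mem_filter.2 ⟨hi, by omega⟩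
    rw [h0] at this
    simp at this
  have h2 : Multiset.card F • (N + 1) ≤ F.sum := by
    apply Multiset.card_nsmul_le_sum
    intro x hx
    have := Multiset.of_mem_filter hx
    omega
  have h3 : F.sum ≤ n := by
    have hsplit := Multiset.filter_add_not (fun i => ¬ i ≤ N) π.parts
    have := congrArg Multiset.sum hsplit
    rw [Multiset.sum_add, π.parts_sum] at this
    rw [← hF] at this
    omega
  simp only [smul_eq_mul] at h2
  by_contra hne
  have : 2 ≤ Multiset.card F := by omega
  nlinarith

lemma sigma_part_ext {K : ℕ}
    {x y : Σ i : Fin K, {μ : Nat.Partition (i : ℕ) // Multiset.card μ.parts ≤ 3}}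
    (h : x.2.1.parts = y.2.1.parts) : x = y := by
  obtain ⟨⟨m, hm⟩, μ, hμ⟩ := x
  obtain ⟨⟨m', hm'⟩, μ', hμ'⟩ := y
  simp only at h
  have hmm : m = m' := by
    have h1 := μ.parts_sum
    have h2 := μ'.parts_sum
    rw [h] at h1
    have := h1.symm.trans h2
    simpa using this
  subst hmm
  have hμμ : μ = μ' := by ext1; exact h
  exact Sigma.ext rfl (heq_of_eq (Subtype.ext hμμ))

set_option maxHeartbeats 1000000 in
def badEquiv (n N : ℕ) (hn : n ≤ 2 * N + 1) :
    {π : Nat.Partition n // Multiset.card π.parts ≤ 4 ∧ ¬ ∀ i ∈ π.parts, i ≤ N} ≃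
    Σ i : Fin (n - N), {μ : Nat.Partition i.1 // Multiset.card μ.parts ≤ 3} where
  toFun := fun ⟨π, hc, hbad⟩ =>
    ⟨⟨(π.parts.filter (fun i => i ≤ N)).sum, by
        -- sum of small parts < n - N
        have hkey := big_filter_card n N hn π hbad
        obtain ⟨b, hb⟩ := Multiset.card_eq_one.1 hkey
        have hsplit := Multiset.filter_add_not (fun i => i ≤ N) π.parts
        have hs := congrArg Multiset.sum hsplit
        rw [Multiset.sum_add, π.parts_sum] at hs
        have hbN : ¬ b ≤ N := by
          have : b ∈ π.parts.filter (fun i => ¬ i ≤ N) := by rw [hb]; simp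
          exact (Multiset.mem_filter.1 this).2
        have hbsum : (π.parts.filter (fun i => ¬ (fun i => i ≤ N) i)).sum = b := by
          have : (π.parts.filter (fun i => ¬ i ≤ N)) = {b} := hb
          rw [this]; simp
        rw [hbsum] at hs
        omega⟩,
      ⟨⟨π.parts.filter (fun i => i ≤ N),
        fun hp => π.parts_pos (Multiset.mem_filter.1 hp).1, rfl⟩, by
        have hkey := big_filter_card n N hn π hbad
        have hsplit := Multiset.filter_add_not (fun i => i ≤ N) π.parts
        have := congrArg Multiset.card hsplit
        rw [Multiset.card_add] at this
        simp only
        omega⟩⟩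
  invFun := fun ⟨⟨m, hm⟩, μ, hμ⟩ =>
    ⟨⟨(n - m) ::ₘ μ.parts, by
        intro i hi
        rcases Multiset.mem_cons.1 hi with rfl | h
        · omega
        · exact μ.parts_pos h,
      by rw [Multiset.sum_cons, μ.parts_sum]; simp only [Fin.val_mk]; omega⟩, by
        constructor
        · rw [Multiset.card_cons]; omega
        · push_neg
          exact ⟨n - m, Multiset.mem_cons_self _ _, by omega⟩⟩
  left_inv := by
    rintro ⟨π, hc, hbad⟩
    ext1
    ext1
    simp only
    have hkey := big_filter_card n N hn π hbad
    obtain ⟨b, hb⟩ := Multiset.card_eq_one.1 hkey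
    have hsplit := Multiset.filter_add_not (fun i => i ≤ N) π.parts
    have hs := congrArg Multiset.sum hsplit
    rw [Multiset.sum_add, π.parts_sum, hb] at hs
    simp only [Multiset.sum_singleton] at hs
    have hbn : n - (π.parts.filter (fun i => i ≤ N)).sum = b := by omega
    rw [hbn, ← Multiset.singleton_add, add_comm, ← hb]
    exact hsplit
  right_inv := by
    rintro ⟨⟨m, hm⟩, μ, hμ⟩
    have hparts : Multiset.filter (fun i => i ≤ N) ((n - m) ::ₘ μ.parts) = μ.parts := by
      rw [Multiset.filter_cons_of_neg _ (by omega)]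
      apply Multiset.filter_eq_self.2
      intro x hx
      have h1 : x ≤ μ.parts.sum := Multiset.single_le_sum (fun y _ => Nat.zero_le y) x hx
      rw [μ.parts_sum] at h1
      omega
    exact sigma_part_ext hparts

lemma C2 (n N : ℕ) (hn : n ≤ 2 * N + 1) :
    (pAtMost (n : ℤ) 4 : ℤ) =
      (pBdd (n : ℤ) 4 N : ℤ) + ∑ m ∈ Finset.range (n - N), (pAtMost (m : ℤ) 3 : ℤ) := by
  have hsplit : Nat.card {π : Nat.Partition n // Multiset.card π.parts ≤ 4} =
      Nat.card {π : Nat.Partition n // Multiset.card π.parts ≤ 4 ∧ ∀ i ∈ π.parts, i ≤ N} +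
      Nat.card {π : Nat.Partition n //
        Multiset.card π.parts ≤ 4 ∧ ¬ ∀ i ∈ π.parts, i ≤ N} := by
    rw [Nat.card_congr (Equiv.subtypeEquivRight (q := fun π : Nat.Partition n =>
      (Multiset.card π.parts ≤ 4 ∧ ∀ i ∈ π.parts, i ≤ N) ∨
      (Multiset.card π.parts ≤ 4 ∧ ¬ ∀ i ∈ π.parts, i ≤ N)) (fun π => by tauto))]
    exact card_subtype_or (fun π => by tauto)
  have hbad : Nat.card {π : Nat.Partition n //
      Multiset.card π.parts ≤ 4 ∧ ¬ ∀ i ∈ π.parts, i ≤ N} =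
      ∑ m ∈ Finset.range (n - N),
        Nat.card {μ : Nat.Partition m // Multiset.card μ.parts ≤ 3} := by
    rw [Nat.card_congr (badEquiv n N hn), Nat.card_eq_fintype_card, Fintype.card_sigma,
      ← Fin.sum_univ_eq_sum_range
        (fun m => Nat.card {μ : Nat.Partition m // Multiset.card μ.parts ≤ 3}) (n - N)]
    exact Finset.sum_congr rfl (fun i _ => Nat.card_eq_fintype_card.symm)
  rw [pAtMost_ofNat, pBdd_ofNat, hsplit, hbad]
  push_cast
  rw [Finset.sum_congr rfl (fun (m : ℕ) _ => by
    rw [pAtMost_ofNat m 3] :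
      ∀ m ∈ Finset.range (n - N), (pAtMost (m : ℤ) 3 : ℤ) =
        (Nat.card {μ : Nat.Partition m // Multiset.card μ.parts ≤ 3} : ℤ))]

lemma pBdd_congr {x y : ℤ} (h : x = y) (m N : ℕ) : pBdd x m N = pBdd y m N := by rw [h]

open PowerSeries

lemma pAtMost_rec' (n : ℤ) (m : ℕ) (c : ℤ) (hc : (m : ℤ) + 1 = c) :
    (pAtMost n (m + 1) : ℤ) = pAtMost (n - c) (m + 1) + pAtMost n m := by
  rw [← hc]
  exact pAtMost_rec n m

lemma pAtMost_congr {x y : ℤ} (h : x = y) (m : ℕ) : pAtMost x m = pAtMost y m := by rw [h]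

lemma pAtMost_one (n : ℤ) (h : 0 ≤ n) : (pAtMost n 1 : ℤ) = 1 := by
  lift n to ℕ using h
  induction n with
  | zero =>
    have h1 := pAtMost_rec' ((0:ℕ):ℤ) 0 1 (by norm_num)
    rw [pAtMost_neg (show ((0:ℕ):ℤ) - 1 < 0 by norm_num) (0+1)] at h1
    rw [pAtMost_zero] at h1
    norm_num at h1 ⊢
    linarith [h1]
  | succ k ih =>
    have h1 := pAtMost_rec' ((k+1:ℕ):ℤ) 0 1 (by norm_num)
    rw [pAtMost_congr (show ((k+1:ℕ):ℤ) - 1 = ((k:ℕ):ℤ) by push_cast; ring) 1] at h1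
    rw [pAtMost_zero, if_neg (by push_cast; omega : ¬ ((k+1:ℕ):ℤ) = 0)] at h1
    norm_num at h1 ⊢
    linarith [h1, ih]

lemma coeff_mul_one_sub_X_pow (f : PowerSeries ℤ) (m d : ℕ) :
    (PowerSeries.coeff d) (f * (1 - X ^ m)) =
    PowerSeries.coeff d f - if m ≤ d then PowerSeries.coeff (d - m) f else 0 := by
  rw [mul_sub, mul_one, map_sub, PowerSeries.coeff_mul_X_pow']

/-- `∑_{N≥0} p(2N-(2a+1),4,N) z^N = z^{a+1}(1+z-z^{a+1}) / ((1-z)^2 (1-z^2)(1-z^3))`. -/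
theorem stmt4 (a : ℕ) :
    (PowerSeries.mk fun N : ℕ => (pBdd (2 * (N : ℤ) - (2 * a + 1)) 4 N : ℤ)) *
      ((1 - X) ^ 2 * (1 - X ^ 2) * (1 - X ^ 3)) =
    X ^ (a + 1) * (1 + X - X ^ (a + 1)) := by
  set P0 : PowerSeries ℤ := PowerSeries.mk fun n : ℕ => (pAtMost (n : ℤ) 0 : ℤ) with hP0
  set P1 : PowerSeries ℤ := PowerSeries.mk fun n : ℕ => (pAtMost (n : ℤ) 1 : ℤ) with hP1
  set P2 : PowerSeries ℤ := PowerSeries.mk fun n : ℕ => (pAtMost (n : ℤ) 2 : ℤ) with hP2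
  set P3 : PowerSeries ℤ := PowerSeries.mk fun n : ℕ => (pAtMost (n : ℤ) 3 : ℤ) with hP3
  set P4odd : PowerSeries ℤ :=
    PowerSeries.mk fun k : ℕ => (pAtMost (2 * (k : ℤ) + 1) 4 : ℤ) with hP4odd
  set PA3odd : PowerSeries ℤ :=
    PowerSeries.mk fun k : ℕ => (pAtMost (2 * (k : ℤ) + 1) 3 : ℤ) with hPA3odd
  set PA2odd : PowerSeries ℤ :=
    PowerSeries.mk fun k : ℕ => (pAtMost (2 * (k : ℤ) + 1) 2 : ℤ) with hPA2odd
  set PA2even : PowerSeries ℤ :=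
    PowerSeries.mk fun k : ℕ => (pAtMost (2 * (k : ℤ)) 2 : ℤ) with hPA2even
  set PC : PowerSeries ℤ :=
    PowerSeries.mk fun N : ℕ => ∑ m ∈ Finset.range (N + 1), (pAtMost (m : ℤ) 3 : ℤ) with hPC
  set U : PowerSeries ℤ := PowerSeries.mk fun _ : ℕ => (1 : ℤ) with hU
  have hgen : ∀ m : ℕ,
      (PowerSeries.mk fun n : ℕ => (pAtMost (n : ℤ) (m+1) : ℤ)) * (1 - X ^ (m+1)) =
      PowerSeries.mk fun n : ℕ => (pAtMost (n : ℤ) m : ℤ) := by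
    intro m
    ext d
    simp only [coeff_mul_one_sub_X_pow, coeff_mk]
    have hrec := pAtMost_rec' (d : ℤ) m ((m:ℤ)+1) rfl
    by_cases hd : m + 1 ≤ d
    · rw [if_pos hd, pAtMost_congr
        (show ((d - (m+1) : ℕ) : ℤ) = (d:ℤ) - ((m:ℤ)+1) by push_cast; omega) (m+1)]
      linarith [hrec]
    · rw [if_neg hd]
      rw [pAtMost_neg (show (d:ℤ) - ((m:ℤ)+1) < 0 by push_cast; omega) (m+1)] at hrec
      push_cast at hrec
      linarith [hrec]
  have hP0one : P0 = 1 := by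
    ext d
    rw [hP0, coeff_mk, PowerSeries.coeff_one, pAtMost_zero]
    by_cases hd : d = 0 <;> simp [hd]
  have h1 : P1 * (1 - X ^ 1) = 1 := by rw [hP1, hgen 0, ← hP0, hP0one]
  have h2 : P2 * (1 - X ^ 2) = P1 := hgen 1
  have h3 : P3 * (1 - X ^ 3) = P2 := hgen 2
  have hS1 : PC * (1 - X ^ 1) = P3 := by
    ext d
    simp only [hPC, hP3, coeff_mul_one_sub_X_pow, coeff_mk]
    by_cases hd : 1 ≤ d
    · rw [if_pos hd,
        show d + 1 = (d - 1 + 1) + 1 by omega, Finset.sum_range_succ,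
        show d - 1 + 1 = d by omega]
      ring
    · rw [if_neg hd, show d = 0 by omega]
      simp
  have hS3 : P4odd * (1 - X ^ 2) = PA3odd := by
    ext d
    simp only [hP4odd, hPA3odd, coeff_mul_one_sub_X_pow, coeff_mk]
    have hrec := pAtMost_rec' (2 * (d : ℤ) + 1) 3 4 (by norm_num)
    rw [pAtMost_congr (show (2 * (d:ℤ) + 1) - 4 = 2 * ((d:ℤ) - 2) + 1 by ring) 4] at hrec
    by_cases hd : 2 ≤ d
    · rw [if_pos hd, pAtMost_congr
        (show 2 * ((d - 2 : ℕ) : ℤ) + 1 = 2 * ((d:ℤ) - 2) + 1 by push_cast; omega) 4]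
      linarith [hrec]
    · rw [if_neg hd]
      rw [pAtMost_neg (show 2 * ((d:ℤ) - 2) + 1 < 0 by push_cast; omega) 4] at hrec
      push_cast at hrec
      linarith [hrec]
  have hS4 : PA3odd * (1 - X ^ 3) = PA2odd + PA2even * X ^ 1 := by
    ext d
    simp only [hPA3odd, hPA2odd, hPA2even, coeff_mul_one_sub_X_pow, _root_.map_add,
      PowerSeries.coeff_mul_X_pow', coeff_mk]
    have hrec1 := pAtMost_rec' (2 * (d : ℤ) + 1) 2 3 (by norm_num)
    have hrec2 := pAtMost_rec' (2 * (d : ℤ) + 1 - 3) 2 3 (by norm_num)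
    rw [pAtMost_congr (show (2 * (d:ℤ) + 1) - 3 = 2 * ((d:ℤ) - 1) by ring) 3] at hrec1
    rw [pAtMost_congr (show (2 * (d:ℤ) + 1 - 3) = 2 * ((d:ℤ) - 1) by ring) 3] at hrec2
    rw [pAtMost_congr (show (2 * (d:ℤ) + 1 - 3) - 3 = 2 * ((d:ℤ) - 3) + 1 by ring) 3] at hrec2
    rw [pAtMost_congr (show (2 * (d:ℤ) + 1 - 3) = 2 * ((d:ℤ) - 1) by ring) 2] at hrec2
    by_cases hd3 : 3 ≤ d
    · rw [if_pos hd3, if_pos (by omega : 1 ≤ d),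
        pAtMost_congr
          (show 2 * ((d - 3 : ℕ) : ℤ) + 1 = 2 * ((d:ℤ) - 3) + 1 by push_cast; omega) 3,
        pAtMost_congr (show 2 * ((d - 1 : ℕ) : ℤ) = 2 * ((d:ℤ) - 1) by push_cast; omega) 2]
      linarith [hrec1, hrec2]
    · rw [if_neg hd3]
      rw [pAtMost_neg (show 2 * ((d:ℤ) - 3) + 1 < 0 by push_cast; omega) 3] at hrec2
      push_cast at hrec2
      by_cases hd1 : 1 ≤ d
      · rw [if_pos hd1,
          pAtMost_congr (show 2 * ((d - 1 : ℕ) : ℤ) = 2 * ((d:ℤ) - 1) by push_cast; omega) 2]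
        linarith [hrec1, hrec2]
      · rw [if_neg hd1]
        rw [pAtMost_neg (show 2 * ((d:ℤ) - 1) < 0 by push_cast; omega) 3] at hrec1
        rw [pAtMost_neg (show 2 * ((d:ℤ) - 1) < 0 by push_cast; omega) 2] at hrec2
        push_cast at hrec1 hrec2
        linarith [hrec1, hrec2]
  have hS5 : PA2odd * (1 - X ^ 1) = U := by
    ext d
    simp only [hPA2odd, hU, coeff_mul_one_sub_X_pow, coeff_mk]
    have hrec := pAtMost_rec' (2 * (d : ℤ) + 1) 1 2 (by norm_num)
    rw [pAtMost_congr (show (2 * (d:ℤ) + 1) - 2 = 2 * ((d:ℤ) - 1) + 1 by ring) 2,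
      pAtMost_one (2 * (d:ℤ) + 1) (by positivity)] at hrec
    by_cases hd : 1 ≤ d
    · rw [if_pos hd, pAtMost_congr
        (show 2 * ((d - 1 : ℕ) : ℤ) + 1 = 2 * ((d:ℤ) - 1) + 1 by push_cast; omega) 2]
      linarith [hrec]
    · rw [if_neg hd]
      rw [pAtMost_neg (show 2 * ((d:ℤ) - 1) + 1 < 0 by push_cast; omega) 2] at hrec
      push_cast at hrec
      linarith [hrec]
  have hS6 : PA2even * (1 - X ^ 1) = U := by
    ext d
    simp only [hPA2even, hU, coeff_mul_one_sub_X_pow, coeff_mk]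
    have hrec := pAtMost_rec' (2 * (d : ℤ)) 1 2 (by norm_num)
    rw [pAtMost_congr (show (2 * (d:ℤ)) - 2 = 2 * ((d:ℤ) - 1) by ring) 2,
      pAtMost_one (2 * (d:ℤ)) (by positivity)] at hrec
    by_cases hd : 1 ≤ d
    · rw [if_pos hd, pAtMost_congr
        (show 2 * ((d - 1 : ℕ) : ℤ) = 2 * ((d:ℤ) - 1) by push_cast; omega) 2]
      linarith [hrec]
    · rw [if_neg hd]
      rw [pAtMost_neg (show 2 * ((d:ℤ) - 1) < 0 by push_cast; omega) 2] at hrec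
      push_cast at hrec
      linarith [hrec]
  have hS7 : U * (1 - X ^ 1) = 1 := by
    ext d
    simp only [hU, coeff_mul_one_sub_X_pow, coeff_mk, PowerSeries.coeff_one]
    by_cases hd : 1 ≤ d
    · rw [if_pos hd, if_neg (by omega : ¬ d = 0)]
      ring
    · rw [if_neg hd, if_pos (by omega : d = 0)]
      ring
  have hS0 : (PowerSeries.mk fun N : ℕ => (pBdd (2 * (N : ℤ) - (2 * a + 1)) 4 N : ℤ)) =
      P4odd * X ^ (a + 1) - PC * X ^ (2 * a + 2) := by
    ext N
    simp only [hP4odd, hPC, coeff_mk, map_sub, PowerSeries.coeff_mul_X_pow']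
    by_cases hN : a + 1 ≤ N
    · rw [if_pos hN]
      set n' : ℕ := 2 * N - (2 * a + 1) with hn'
      have hcast : (2 * (N : ℤ) - (2 * (a:ℤ) + 1)) = (n' : ℤ) := by
        rw [hn']; push_cast; omega
      rw [pBdd_congr hcast,
        pAtMost_congr (show 2 * ((N - (a+1) : ℕ) : ℤ) + 1 = (n' : ℤ) by push_cast; omega) 4]
      have hC2 := C2 n' N (by omega)
      by_cases hN2 : 2 * a + 2 ≤ N
      · rw [if_pos hN2,
          show Finset.range (N - (2 * a + 2) + 1) = Finset.range (n' - N) by congr 1; omega]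
        linarith [hC2]
      · rw [if_neg hN2]
        rw [show Finset.range (n' - N) = Finset.range 0 by congr 1; omega,
          Finset.sum_range_zero] at hC2
        linarith [hC2]
    · rw [if_neg hN]
      by_cases hN2 : 2 * a + 2 ≤ N
      · omega
      · rw [if_neg hN2,
          pBdd_neg (show 2 * (N:ℤ) - (2 * (a:ℤ) + 1) < 0 by push_cast; omega)]
        norm_num
  rw [hS0]
  linear_combination (((1:PowerSeries ℤ) - X)^2 * (1 - X^3) * X^(a+1)) * hS3 +
    ((1 - X)^2 * X^(a+1)) * hS4 +
    ((1 - X) * X^(a+1)) * hS5 + ((1 - X) * X * X^(a+1)) * hS6 + ((1 + X) * X^(a+1)) * hS7 -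
    ((1 - X) * (1 - X^2) * (1 - X^3) * X^(2*a+2)) * hS1 -
    ((1 - X) * (1 - X^2) * X^(2*a+2)) * h3 -
    ((1 - X) * X^(2*a+2)) * h2 -
    (X^(2*a+2)) * h1
end

section
/- For all nonnegative integers N and a, p(2N - 2a - 1, 4, N) - p(2N - 2a - 2, 4, N) = p(N - a - 2, 3) - p(N - 2a - 2, 3). -/
/-! ### Counting via antitone tuples -/

def cnt (n m N : ℕ) : ℕ :=
  ((Fintype.piFinset fun _ : Fin m => Finset.range (N+1)).filter
    fun x => (∀ i j : Fin m, i ≤ j → x j ≤ x i) ∧ ∑ i, x i = n).card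

lemma C0 (n N : ℕ) : cnt n 0 N = if n = 0 then 1 else 0 := by
  rcases eq_or_ne n 0 with rfl | h
  · simp [cnt]
  · simp [cnt, h, Finset.filter_eq_empty_iff]
    omega

lemma C1 (n m : ℕ) : cnt n m 0 = if n = 0 then 1 else 0 := by
  unfold cnt
  rcases eq_or_ne n 0 with rfl | h
  · rw [if_pos rfl]
    rw [Finset.card_eq_one]
    refine ⟨fun _ => 0, ?_⟩
    ext x
    simp only [Finset.mem_filter, Fintype.mem_piFinset, Finset.mem_range, Finset.mem_singleton]
    constructor
    · rintro ⟨h1, -, -⟩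
      funext i
      have := h1 i; omega
    · rintro rfl
      simp
  · rw [if_neg h, Finset.card_eq_zero, Finset.filter_eq_empty_iff]
    rintro x hx ⟨-, hsum⟩
    simp only [Fintype.mem_piFinset, Finset.mem_range] at hx
    have hz : ∑ i, x i = 0 := Finset.sum_eq_zero fun i _ => by have h2 := hx i; omega
    exact h (by rw [← hsum, hz])

lemma C2_s14 (n m N : ℕ) :
    cnt n (m+1) (N+1) = cnt n (m+1) N + if N+1 ≤ n then cnt (n-(N+1)) m (N+1) else 0 := by
  unfold cnt
  rw [← Finset.card_filter_add_card_filter_not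
      (s := (Fintype.piFinset fun _ : Fin (m+1) => Finset.range (N+1+1)).filter
        fun x => (∀ i j : Fin (m+1), i ≤ j → x j ≤ x i) ∧ ∑ i, x i = n)
      (p := fun x => x 0 ≤ N)]
  congr 1
  · congr 1
    ext x
    simp only [Finset.mem_filter, Fintype.mem_piFinset, Finset.mem_range]
    constructor
    · rintro ⟨⟨hmem, hanti, hsum⟩, h0⟩
      refine ⟨fun i => ?_, hanti, hsum⟩
      have := hanti 0 i (Fin.zero_le i)
      omega
    · rintro ⟨hmem, hanti, hsum⟩
      have h0 := hmem 0
      exact ⟨⟨fun i => by have := hmem i; omega, hanti, hsum⟩, by omega⟩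
  · by_cases h : N+1 ≤ n
    · rw [if_pos h]
      refine Finset.card_bij' (fun x _ => Fin.tail x) (fun y _ => Fin.cons (N+1) y)
        ?_ ?_ ?_ ?_
      · rintro x hx
        simp only [Finset.mem_filter, Fintype.mem_piFinset, Finset.mem_range, not_le] at hx ⊢
        obtain ⟨⟨hmem, hanti, hsum⟩, h0⟩ := hx
        have hx0 : x 0 = N+1 := by have := hmem 0; omega
        refine ⟨fun i => hmem i.succ,
          fun i j hij => hanti i.succ j.succ (Fin.succ_le_succ_iff.mpr hij), ?_⟩
        have hsum' := Fin.sum_univ_succ x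
        rw [hsum] at hsum'
        have he : ∑ i : Fin m, Fin.tail x i = ∑ i : Fin m, x i.succ := rfl
        omega
      · rintro y hy
        simp only [Finset.mem_filter, Fintype.mem_piFinset, Finset.mem_range, not_le] at hy ⊢
        obtain ⟨hmem, hanti, hsum⟩ := hy
        have hle : ∀ j : Fin (m+1), Fin.cons (α := fun _ => ℕ) (N+1) y j ≤ N+1 := by
          intro j
          rcases Fin.eq_zero_or_eq_succ j with rfl | ⟨l, rfl⟩
          · simp
          · simp only [Fin.cons_succ]
            have := hmem l; omega
        refine ⟨⟨fun i => by have := hle i; omega, ?_, ?_⟩, by simp⟩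
        · intro i j hij
          rcases Fin.eq_zero_or_eq_succ i with rfl | ⟨k, rfl⟩
          · simpa using hle j
          · rcases Fin.eq_zero_or_eq_succ j with rfl | ⟨l, rfl⟩
            · exact absurd (le_antisymm hij (Fin.zero_le _)) (Fin.succ_ne_zero k)
            · simp only [Fin.cons_succ]
              exact hanti k l (Fin.succ_le_succ_iff.mp hij)
        · rw [Fin.sum_univ_succ]
          simp only [Fin.cons_zero, Fin.cons_succ]
          rw [hsum]; omega
      · intro x hx
        simp only [Finset.mem_filter, Fintype.mem_piFinset, Finset.mem_range, not_le] at hx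
        have hx0 : x 0 = N+1 := by have := hx.1.1 0; omega
        show Fin.cons (N+1) (Fin.tail x) = x
        rw [← hx0]
        exact Fin.cons_self_tail x
      · intro y hy
        funext i
        show Fin.tail (Fin.cons (α := fun _ => ℕ) (N+1) y) i = y i
        simp [Fin.tail]
    · rw [if_neg h, Finset.card_eq_zero, Finset.filter_eq_empty_iff]
      rintro x hx hneg
      simp only [Finset.mem_filter, Fintype.mem_piFinset, Finset.mem_range] at hx
      obtain ⟨hmem, hanti, hsum⟩ := hx
      have : x 0 ≤ ∑ i, x i := Finset.single_le_sum (fun i _ => Nat.zero_le _) (Finset.mem_univ 0)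
      rw [hsum] at this
      omega

lemma C4 (n m N : ℕ) (h : m * N < n) : cnt n m N = 0 := by
  rw [cnt, Finset.card_eq_zero, Finset.filter_eq_empty_iff]
  rintro x hx ⟨-, hsum⟩
  simp only [Fintype.mem_piFinset, Finset.mem_range] at hx
  have : ∑ i, x i ≤ ∑ _i : Fin m, N := Finset.sum_le_sum fun i _ => by have := hx i; omega
  simp [Finset.sum_const] at this
  omega

lemma C3 (n m N : ℕ) (h : n ≤ m * N) : cnt n m N = cnt (m * N - n) m N := by
  unfold cnt
  refine Finset.card_bij' (fun x _ => fun i => N - x i.rev) (fun y _ => fun i => N - y i.rev)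
    ?_ ?_ ?_ ?_
  case refine_3 | refine_4 =>
    intro x hx
    simp only [Finset.mem_filter, Fintype.mem_piFinset, Finset.mem_range] at hx
    funext i
    have := hx.1 i
    simp only [Fin.rev_rev]
    omega
  all_goals {
    intro x hx
    simp only [Finset.mem_filter, Fintype.mem_piFinset, Finset.mem_range] at hx ⊢
    obtain ⟨hmem, hanti, hsum⟩ := hx
    have hub : ∀ i, x i ≤ N := fun i => by have := hmem i; omega
    have hs : ∑ i : Fin m, (N - x (Fin.rev i)) = ∑ i, (N - x i) :=
      Fintype.sum_equiv Fin.revPerm _ _ (fun i => rfl)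
    have hadd : ∑ i, (N - x i) + ∑ i, x i = m * N := by
      rw [← Finset.sum_add_distrib]
      rw [Finset.sum_congr rfl
        (fun i _ => by have := hub i; omega : ∀ i ∈ Finset.univ, N - x i + x i = N)]
      simp [Finset.sum_const, mul_comm]
    refine ⟨fun i => by have := hub i.rev; omega, ?_, ?_⟩
    · intro i j hij
      have := hanti j.rev i.rev (Fin.rev_le_rev.mpr hij)
      omega
    · omega }

lemma cnt_stab (n m : ℕ) : ∀ K, n ≤ K → cnt n m K = cnt n m n := by
  intro K
  induction K with
  | zero => intro h; have : n = 0 := by omega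
            subst this; rfl
  | succ K ih =>
    intro h
    rcases eq_or_lt_of_le h with h' | h'
    · rw [h']
    · have hn : n ≤ K := by omega
      rw [← ih hn]
      cases m with
      | zero => rw [C0, C0]
      | succ m => rw [C2_s14, if_neg (by omega), add_zero]

/-! ### Counting via partitions -/

noncomputable def q (n m N : ℕ) : ℕ :=
  Nat.card {π : Nat.Partition n // Multiset.card π.parts ≤ m ∧ ∀ i ∈ π.parts, i ≤ N}

lemma ncard_split {α : Type*} [Finite α] (P Q : α → Prop) :
    Nat.card {x // P x} = Nat.card {x // P x ∧ Q x} + Nat.card {x // P x ∧ ¬ Q x} := by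
  classical
  rw [← Nat.card_sum]
  apply Nat.card_congr
  exact { toFun := fun x => if h : Q x.1 then Sum.inl ⟨x.1, x.2, h⟩ else Sum.inr ⟨x.1, x.2, h⟩
          invFun := Sum.elim (fun y => ⟨y.1, y.2.1⟩) (fun y => ⟨y.1, y.2.1⟩)
          left_inv := by intro x; by_cases h : Q x.1 <;> simp [h]
          right_inv := by rintro (y | y) <;> simp [y.2.2] }

lemma Qzero (m N : ℕ) : q 0 m N = 1 := by
  rw [q]
  haveI : Unique {π : Nat.Partition 0 // Multiset.card π.parts ≤ m ∧ ∀ i ∈ π.parts, i ≤ N} :=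
    ⟨⟨⟨default, by simp, by simp⟩⟩, fun x => Subtype.ext (Subsingleton.elim _ _)⟩
  exact Nat.card_unique

lemma Q0 (n N : ℕ) (h : n ≠ 0) : q n 0 N = 0 := by
  rw [q]
  haveI : IsEmpty {π : Nat.Partition n // Multiset.card π.parts ≤ 0 ∧ ∀ i ∈ π.parts, i ≤ N} := by
    refine ⟨fun x => h ?_⟩
    have hc : Multiset.card x.1.parts = 0 := by have := x.2.1; omega
    have hp : x.1.parts = 0 := Multiset.card_eq_zero.mp hc
    have := x.1.parts_sum
    rw [hp] at this
    simpa using this.symm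
  exact Nat.card_of_isEmpty

lemma Q1 (n m : ℕ) (h : n ≠ 0) : q n m 0 = 0 := by
  rw [q]
  haveI : IsEmpty {π : Nat.Partition n // Multiset.card π.parts ≤ m ∧ ∀ i ∈ π.parts, i ≤ 0} := by
    refine ⟨fun x => h ?_⟩
    have hp : x.1.parts = 0 := Multiset.eq_zero_of_forall_notMem fun a ha => by
      have h1 := x.1.parts_pos ha
      have h2 := x.2.2 a ha
      omega
    have := x.1.parts_sum
    rw [hp] at this
    simpa using this.symm
  exact Nat.card_of_isEmpty

def eraseEquiv (n m N : ℕ) (h : N+1 ≤ n) :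
    {π : Nat.Partition n //
        (Multiset.card π.parts ≤ m+1 ∧ ∀ i ∈ π.parts, i ≤ N+1) ∧ (N+1) ∈ π.parts} ≃
    {π : Nat.Partition (n-(N+1)) //
        Multiset.card π.parts ≤ m ∧ ∀ i ∈ π.parts, i ≤ N+1} where
  toFun π := ⟨⟨π.1.parts.erase (N+1),
      fun hi => π.1.parts_pos (Multiset.mem_of_mem_erase hi),
      by
        have h1 := Multiset.sum_erase π.2.2
        have h2 := π.1.parts_sum
        omega⟩,
    by
      have h1 := Multiset.card_erase_of_mem π.2.2
      have h2 := π.2.1.1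
      have h3 : 0 < Multiset.card π.1.parts :=
        Multiset.card_pos_iff_exists_mem.mpr ⟨_, π.2.2⟩
      simp only [h1, Nat.pred_eq_sub_one]
      omega,
    fun i hi => π.2.1.2 i (Multiset.mem_of_mem_erase hi)⟩
  invFun π := ⟨⟨(N+1) ::ₘ π.1.parts,
      fun hi => by
        rcases Multiset.mem_cons.mp hi with rfl | hi
        · omega
        · exact π.1.parts_pos hi,
      by
        rw [Multiset.sum_cons, π.1.parts_sum]
        omega⟩,
    ⟨by
        rw [Multiset.card_cons]
        have := π.2.1
        omega,
      fun i hi => by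
        rcases Multiset.mem_cons.mp hi with rfl | hi
        · exact le_refl _
        · exact π.2.2 i hi⟩,
    Multiset.mem_cons_self _ _⟩
  left_inv π := Subtype.ext (Nat.Partition.ext (Multiset.cons_erase π.2.2))
  right_inv π := Subtype.ext (Nat.Partition.ext (Multiset.erase_cons_head _ _))

lemma Q2 (n m N : ℕ) :
    q n (m+1) (N+1) = q n (m+1) N + if N+1 ≤ n then q (n-(N+1)) m (N+1) else 0 := by
  classical
  rw [q, ncard_split
    (fun π : Nat.Partition n => Multiset.card π.parts ≤ m+1 ∧ ∀ i ∈ π.parts, i ≤ N+1)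
    (fun π => (N+1) ∈ π.parts)]
  have hnot : Nat.card {π : Nat.Partition n //
      (Multiset.card π.parts ≤ m+1 ∧ ∀ i ∈ π.parts, i ≤ N+1) ∧ ¬ (N+1) ∈ π.parts}
      = q n (m+1) N := by
    rw [q]
    apply Nat.card_congr
    apply Equiv.subtypeEquivRight
    intro π
    constructor
    · rintro ⟨⟨h1, h2⟩, h3⟩
      refine ⟨h1, fun i hi => ?_⟩
      have := h2 i hi
      rcases eq_or_lt_of_le this with rfl | h4
      · exact absurd hi h3
      · omega
    · rintro ⟨h1, h2⟩
      refine ⟨⟨h1, fun i hi => by have := h2 i hi; omega⟩, fun hmem => ?_⟩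
      have := h2 _ hmem
      omega
  have hmem : Nat.card {π : Nat.Partition n //
      (Multiset.card π.parts ≤ m+1 ∧ ∀ i ∈ π.parts, i ≤ N+1) ∧ (N+1) ∈ π.parts}
      = if N+1 ≤ n then q (n-(N+1)) m (N+1) else 0 := by
    split
    case isTrue h =>
      rw [q]
      exact Nat.card_congr (eraseEquiv n m N h)
    case isFalse h =>
      haveI : IsEmpty {π : Nat.Partition n //
          (Multiset.card π.parts ≤ m+1 ∧ ∀ i ∈ π.parts, i ≤ N+1) ∧ (N+1) ∈ π.parts} := by
        refine ⟨fun x => h ?_⟩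
        have := Multiset.single_le_sum (fun a _ => Nat.zero_le a) _ x.2.2
        rw [x.1.parts_sum] at this
        exact this
      exact Nat.card_of_isEmpty
  rw [hnot, hmem, add_comm]

lemma q_eq_cnt : ∀ m N n, q n m N = cnt n m N := by
  intro m
  induction m with
  | zero =>
    intro N n
    rw [C0]
    rcases eq_or_ne n 0 with rfl | h
    · rw [if_pos rfl, Qzero]
    · rw [if_neg h, Q0 _ _ h]
  | succ m ih =>
    intro N
    induction N with
    | zero =>
      intro n
      rw [C1]
      rcases eq_or_ne n 0 with rfl | h
      · rw [if_pos rfl, Qzero]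
      · rw [if_neg h, Q1 _ _ h]
    | succ N ihN =>
      intro n
      rw [Q2, C2_s14, ihN]
      congr 1
      split
      · exact ih _ _
      · rfl

/-! ### Integer-valued versions -/

def P4 (n : ℤ) (N : ℕ) : ℤ := if 0 ≤ n then (cnt n.toNat 4 N : ℤ) else 0

def T3 (n : ℤ) : ℤ := if 0 ≤ n then (cnt n.toNat 3 n.toNat : ℤ) else 0

lemma R1 (n : ℤ) (N : ℕ) (h : n ≤ 2*(N:ℤ)+2) :
    P4 n (N+1) = P4 n N + T3 (n - N - 1) := by
  by_cases hn : 0 ≤ n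
  · rw [P4, if_pos hn, P4, if_pos hn]
    have hc2 := C2_s14 n.toNat 3 N
    norm_num at hc2
    rw [hc2]
    by_cases hN : (N:ℤ)+1 ≤ n
    · have h1 : N+1 ≤ n.toNat := by omega
      rw [if_pos (show (N:ℤ) < n by omega), T3, if_pos (by omega : (0:ℤ) ≤ n - N - 1)]
      have h2 : (n - N - 1).toNat = n.toNat - (N+1) := by omega
      rw [h2]
      have h3 : n.toNat - (N+1) ≤ N+1 := by omega
      rw [cnt_stab _ 3 (N+1) h3]
      push_cast
      ring
    · rw [if_neg (by omega), T3, if_neg (by omega)]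
      push_cast
      ring
  · rw [P4, if_neg hn, P4, if_neg hn, T3, if_neg (by omega)]
    ring

lemma R2 (n : ℤ) (N : ℕ) : P4 n N = P4 (4*(N:ℤ) - n) N := by
  rcases lt_or_ge n 0 with hn | hn
  · rw [P4, if_neg (by omega), P4, if_pos (by omega)]
    rw [C4 _ 4 N (by omega)]
    simp
  · rcases le_or_gt n (4*(N:ℤ)) with h4 | h4
    · rw [P4, if_pos hn, P4, if_pos (by omega)]
      have h1 : n.toNat ≤ 4 * N := by omega
      have h2 : (4*(N:ℤ) - n).toNat = 4 * N - n.toNat := by omega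
      rw [h2, ← C3 _ 4 N h1]
    · rw [P4, if_pos hn, P4, if_neg (by omega)]
      rw [C4 _ 4 N (by omega)]
      simp

lemma cnt_zero_n (m N : ℕ) : cnt 0 m N = 1 := by
  rw [cnt_stab 0 m N (Nat.zero_le N), ← q_eq_cnt, Qzero]

lemma Ebase1 : P4 1 1 = P4 0 1 := by
  rw [P4, if_pos (by omega), P4, if_pos (by omega)]
  have hc2 := C2_s14 1 3 0
  norm_num at hc2
  show (cnt 1 4 1 : ℤ) = cnt 0 4 1
  rw [hc2, C1, cnt_zero_n, cnt_zero_n]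
  norm_num

lemma E : ∀ N : ℕ, P4 (2*(N:ℤ)-1) N = P4 (2*(N:ℤ)-2) N := by
  intro N
  induction N using Nat.strong_induction_on with
  | _ N ih =>
    match N with
    | 0 =>
      rw [P4, if_neg (by omega), P4, if_neg (by omega)]
    | 1 =>
      have h1 : (2*((1:ℕ):ℤ)-1) = 1 := by norm_num
      have h2 : (2*((1:ℕ):ℤ)-2) = 0 := by norm_num
      rw [h1, h2]
      exact Ebase1
    | (M+2) =>
      have hE := ih M (by omega)
      have h1 := R1 (2*(M:ℤ)+3) (M+1) (by push_cast; omega)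
      have h2 := R1 (2*(M:ℤ)+2) (M+1) (by push_cast; omega)
      have h3 := R2 (2*(M:ℤ)+3) (M+1)
      have h4 := R1 (2*(M:ℤ)+1) M (by push_cast; omega)
      have h5 := R1 (2*(M:ℤ)+2) M (by push_cast; omega)
      have h6 := R2 (2*(M:ℤ)+1) M
      have h7 := R2 (2*(M:ℤ)+2) M
      push_cast at h1 h2 h3 h4 h5 h6 h7 hE ⊢
      ring_nf at h1 h2 h3 h4 h5 h6 h7 hE ⊢
      linarith

lemma D : ∀ (a N : ℕ),
    P4 (2*(N:ℤ) - 2*a - 1) N - P4 (2*(N:ℤ) - 2*a - 2) N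
      = T3 ((N:ℤ) - a - 2) - T3 ((N:ℤ) - 2*a - 2) := by
  intro a
  induction a with
  | zero =>
    intro N
    have hE := E N
    push_cast at hE ⊢
    ring_nf at hE ⊢
    linarith
  | succ a ih =>
    intro N
    cases N with
    | zero =>
      rw [P4, if_neg (by push_cast; omega), P4, if_neg (by push_cast; omega),
        T3, if_neg (by push_cast; omega), T3, if_neg (by push_cast; omega)]
    | succ M =>
      have h1 := R1 (2*(M:ℤ) - 2*a - 1) M (by omega)
      have h2 := R1 (2*(M:ℤ) - 2*a - 2) M (by omega)
      have hih := ih M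
      push_cast at h1 h2 hih ⊢
      ring_nf at h1 h2 hih ⊢
      linarith

lemma pBdd_eq (n : ℤ) (N : ℕ) : (pBdd n 4 N : ℤ) = P4 n N := by
  rw [pBdd, P4]
  split
  · show (q n.toNat 4 N : ℤ) = (cnt n.toNat 4 N : ℤ)
    exact_mod_cast q_eq_cnt 4 N n.toNat
  · rfl

lemma pAtMost_eq (n : ℤ) : (pAtMost n 3 : ℤ) = T3 n := by
  rw [pAtMost, T3]
  split
  case isTrue h =>
    have he : Nat.card {π : Nat.Partition n.toNat // Multiset.card π.parts ≤ 3}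
        = q n.toNat 3 n.toNat := by
      rw [q]
      apply Nat.card_congr
      apply Equiv.subtypeEquivRight
      intro π
      constructor
      · intro h1
        refine ⟨h1, fun i hi => ?_⟩
        have := Multiset.single_le_sum (fun a _ => Nat.zero_le a) _ hi
        rw [π.parts_sum] at this
        exact this
      · exact fun h1 => h1.1
    rw [he, q_eq_cnt]
  · rfl

theorem stmt14 (N a : ℕ) :
    (pBdd (2 * (N : ℤ) - 2 * a - 1) 4 N : ℤ) - pBdd (2 * (N : ℤ) - 2 * a - 2) 4 N =
      (pAtMost ((N : ℤ) - a - 2) 3 : ℤ) - pAtMost ((N : ℤ) - 2 * a - 2) 3 := by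
  rw [pBdd_eq, pBdd_eq, pAtMost_eq, pAtMost_eq]
  exact D a N
end
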